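/- Consider the generalized Ishii system ẋ = -c₂x + b₂y + b₃z, ẏ = c₁x + c₂y + c₃z, ż = a₁₁x² + a₁₂xy + a₂₂y², with a₁₁ = kA₂c₃, a₁₂ = -k(A₁c₃ + A₂b₃), a₂₂ = kA₁b₃, where A₁ = b₂c₃ - b₃c₂ and A₂ = c₂c₃ + b₃c₁. Then H₁ = z + (k/2)(c₃x - b₃y)² and H₂ = (k/3)(c₃x - b₃y)³ + (c₁/2)x² + c₂xy + c₃xz - (b₂/2)y² - b₃yz are first integrals: their derivative along the vector field vanishes identically. -/

import Mathlib

/-- For the generalized Ishii system with the parametrized coefficients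
`a₁₁ = kA₂c₃`, `a₁₂ = -k(A₁c₃ + A₂b₃)`, `a₂₂ = kA₁b₃` (with `A₁ = b₂c₃ - b₃c₂`,
`A₂ = c₂c₃ + b₃c₁`), the functions `H₁ = z + (k/2)(c₃x - b₃y)²` and
`H₂ = (k/3)(c₃x - b₃y)³ + (c₁/2)x² + c₂xy + c₃xz - (b₂/2)y² - b₃yz` are first
integrals: their derivatives along the vector field vanish identically. -/
theorem generalized_ishii_first_integrals (b₂ b₃ c₁ c₂ c₃ k : ℝ)
    (A₁ A₂ : ℝ) (hA₁ : A₁ = b₂ * c₃ - b₃ * c₂) (hA₂ : A₂ = c₂ * c₃ + b₃ * c₁)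
    (f : (Fin 3 → ℝ) → (Fin 3 → ℝ))
    (hf : ∀ p, f p = ![-c₂ * p 0 + b₂ * p 1 + b₃ * p 2,
                       c₁ * p 0 + c₂ * p 1 + c₃ * p 2,
                       k * A₂ * c₃ * (p 0)^2 - k * (A₁ * c₃ + A₂ * b₃) * p 0 * p 1
                         + k * A₁ * b₃ * (p 1)^2])
    (H₁ H₂ : (Fin 3 → ℝ) → ℝ)
    (hH₁ : ∀ p, H₁ p = p 2 + (k/2) * (c₃ * p 0 - b₃ * p 1)^2)
    (hH₂ : ∀ p, H₂ p = (k/3) * (c₃ * p 0 - b₃ * p 1)^3 + (c₁/2) * (p 0)^2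
        + c₂ * p 0 * p 1 + c₃ * p 0 * p 2 - (b₂/2) * (p 1)^2 - b₃ * p 1 * p 2) :
    ∀ p : Fin 3 → ℝ, fderiv ℝ H₁ p (f p) = 0 ∧ fderiv ℝ H₂ p (f p) = 0 := by
  have hH₁' : H₁ = fun p => p 2 + (k/2) * (c₃ * p 0 - b₃ * p 1)^2 := funext hH₁
  have hH₂' : H₂ = fun p => (k/3) * (c₃ * p 0 - b₃ * p 1)^3 + (c₁/2) * (p 0)^2
        + c₂ * p 0 * p 1 + c₃ * p 0 * p 2 - (b₂/2) * (p 1)^2 - b₃ * p 1 * p 2 :=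
    funext hH₂
  subst hH₁' hH₂' hA₁ hA₂
  intro p
  have hx : HasFDerivAt (fun q : Fin 3 → ℝ => q 0)
      (ContinuousLinearMap.proj (R := ℝ) (φ := fun _ : Fin 3 => ℝ) 0) p :=
    (ContinuousLinearMap.proj (R := ℝ) (φ := fun _ : Fin 3 => ℝ) 0).hasFDerivAt
  have hy : HasFDerivAt (fun q : Fin 3 → ℝ => q 1)
      (ContinuousLinearMap.proj (R := ℝ) (φ := fun _ : Fin 3 => ℝ) 1) p :=
    (ContinuousLinearMap.proj (R := ℝ) (φ := fun _ : Fin 3 => ℝ) 1).hasFDerivAt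
  have hz : HasFDerivAt (fun q : Fin 3 → ℝ => q 2)
      (ContinuousLinearMap.proj (R := ℝ) (φ := fun _ : Fin 3 => ℝ) 2) p :=
    (ContinuousLinearMap.proj (R := ℝ) (φ := fun _ : Fin 3 => ℝ) 2).hasFDerivAt
  have hu : HasFDerivAt (fun q : Fin 3 → ℝ => c₃ * q 0 - b₃ * q 1) _ p :=
    (hx.const_mul c₃).sub (hy.const_mul b₃)
  simp only [pow_two, pow_three]
  have h1 : HasFDerivAt (fun q : Fin 3 → ℝ =>
      q 2 + (k/2) * ((c₃ * q 0 - b₃ * q 1) * (c₃ * q 0 - b₃ * q 1))) _ p :=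
    hz.add ((hu.mul hu).const_mul (k/2))
  have h2 : HasFDerivAt (fun q : Fin 3 → ℝ =>
      (k/3) * ((c₃ * q 0 - b₃ * q 1) * ((c₃ * q 0 - b₃ * q 1) * (c₃ * q 0 - b₃ * q 1)))
      + (c₁/2) * (q 0 * q 0) + c₂ * q 0 * q 1 + c₃ * q 0 * q 2
      - (b₂/2) * (q 1 * q 1) - b₃ * q 1 * q 2) _ p :=
    (((((hu.mul (hu.mul hu)).const_mul (k/3)).add ((hx.mul hx).const_mul (c₁/2))).add
      ((hx.const_mul c₂).mul hy)).add ((hx.const_mul c₃).mul hz)).sub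
      ((hy.mul hy).const_mul (b₂/2)) |>.sub ((hy.const_mul b₃).mul hz)
  constructor
  · rw [h1.fderiv]
    simp only [hf, ContinuousLinearMap.add_apply, ContinuousLinearMap.sub_apply,
      ContinuousLinearMap.smul_apply, ContinuousLinearMap.proj_apply, smul_eq_mul,
      Matrix.cons_val_zero, Matrix.cons_val_one, Matrix.head_cons, Matrix.cons_val_two,
      Matrix.tail_cons]
    ring
  · rw [h2.fderiv]
    simp only [hf, Pi.mul_apply, ContinuousLinearMap.add_apply, ContinuousLinearMap.sub_apply,
      ContinuousLinearMap.smul_apply, ContinuousLinearMap.proj_apply, smul_eq_mul,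
      Matrix.cons_val_zero, Matrix.cons_val_one, Matrix.head_cons, Matrix.cons_val_two,
      Matrix.tail_cons]
    ring
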